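/- For the root system Cₙ, the generalized cosines of the fundamental weights satisfy the Vieta identity: for all u ∈ R^n, Σ_{i=1}^n binom(n,i) Θ_{ϖᵢ}(u) = ∏_{k=1}^n (1 + cos(2π u_k)) − 1 ≥ −1, with equality attained at u = ϖⱼ/2. Consequently, with c_i = binom(n,i)/(2^n − 1), the polynomial Σᵢ cᵢ zᵢ has minimum −1/(2^n − 1) on the Chebyshev image T, and the spectral bound yields χ_m(R^n, ∂Vor(Z^n)) ≥ 2^n, which is sharp. -/

import Mathlib

noncomputable section
open scoped BigOperators

abbrev EV (n : ℕ) := EuclideanSpace ℝ (Fin n)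

/-- The hyperoctahedral group `Sₙ ⋉ {±1}ⁿ` (the Weyl group of `Bₙ`/`Cₙ`) acting on `ℝⁿ`
by permutations and sign changes of coordinates. -/
def sgnAct {n : ℕ} (g : Equiv.Perm (Fin n) × (Fin n → Bool)) (μ : EV n) : EV n :=
  WithLp.toLp 2 (fun j => (if g.2 j then (1 : ℝ) else -1) * μ (g.1 j))

/-- The generalized cosine for the Weyl group of `Bₙ`/`Cₙ`. -/
def cGencos {n : ℕ} (μ u : EV n) : ℂ :=
  ((Fintype.card (Equiv.Perm (Fin n) × (Fin n → Bool)) : ℂ))⁻¹ *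
    ∑ g : Equiv.Perm (Fin n) × (Fin n → Bool),
      Complex.exp (-(2 * Real.pi * Complex.I) * ((inner ℝ (sgnAct g μ) u : ℝ) : ℂ))

/-- The fundamental weight `ϖ₁ = e₁` of `Cₙ`. -/
def cϖ₁ {n : ℕ} : EV n := WithLp.toLp 2 (fun j => if (j : ℕ) = 0 then 1 else 0)

/-- The fundamental weight `ϖ₂ = e₁ + e₂` of `Cₙ`/`Bₙ`. -/
def cϖ₂ {n : ℕ} : EV n := WithLp.toLp 2 (fun j => if (j : ℕ) < 2 then 1 else 0)

/-- The fundamental weight `ϖ_{i+1} = e₁ + … + e_{i+1}` of `Cₙ`, for `i : Fin n`. -/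
def cϖ {n : ℕ} (i : Fin n) : EV n := WithLp.toLp 2 (fun j => if (j : ℕ) ≤ (i : ℕ) then 1 else 0)

/-- The boundary of the cube `Vor(ℤⁿ) = [−1/2,1/2]ⁿ`. -/
def cubeBoundary (n : ℕ) : Set (EV n) :=
  { u | (∀ i, |u i| ≤ 1 / 2) ∧ ∃ i, |u i| = 1 / 2 }

namespace Statement18Aux

open Finset

variable {n : ℕ}

lemma sum_bool_exp (a : ℝ) :
    ∑ b : Bool, Complex.exp (-(2*Real.pi*Complex.I) * (((if b then (1:ℝ) else -1) * a : ℝ) : ℂ))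
    = 2 * Complex.cos (2*Real.pi*a) := by
  rw [Fintype.sum_bool, Complex.two_cos]
  norm_num; ring_nf

lemma cGencos_cϖ (i : Fin n) (u : EV n) :
    cGencos (cϖ i) u = ((n.factorial : ℂ))⁻¹ *
      ∑ σ : Equiv.Perm (Fin n), ∏ j ∈ univ.filter (fun j => ((σ j : ℕ) ≤ (i:ℕ))),
        (Complex.cos (2*Real.pi*u j)) := by
  have hinner : ∀ (g : Equiv.Perm (Fin n) × (Fin n → Bool)) (μ : EV n),
      (inner ℝ (sgnAct g μ) u : ℝ) = ∑ j, (if g.2 j then (1:ℝ) else -1) * (μ (g.1 j) * u j) := by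
    intro g μ; simp [PiLp.inner_apply, sgnAct, mul_assoc, mul_comm]
  have hexp : ∀ (g : Equiv.Perm (Fin n) × (Fin n → Bool)) (μ : EV n),
      Complex.exp (-(2 * Real.pi * Complex.I) * ((inner ℝ (sgnAct g μ) u : ℝ) : ℂ))
      = ∏ j, Complex.exp (-(2*Real.pi*Complex.I) *
          (((if g.2 j then (1:ℝ) else -1) * (μ (g.1 j) * u j) : ℝ) : ℂ)) := by
    intro g μ
    rw [hinner, ← Complex.exp_sum]
    congr 1
    push_cast
    rw [Finset.mul_sum]
  unfold cGencos
  rw [Fintype.sum_prod_type]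
  have hσ : ∀ σ : Equiv.Perm (Fin n),
      (∑ ε : Fin n → Bool, Complex.exp (-(2 * Real.pi * Complex.I) *
        ((inner ℝ (sgnAct (σ, ε) (cϖ i)) u : ℝ) : ℂ)))
      = 2^n * ∏ j ∈ univ.filter (fun j => ((σ j : ℕ) ≤ (i:ℕ))), Complex.cos (2*Real.pi*u j) := by
    intro σ
    simp only [hexp]
    rw [← Fintype.piFinset_univ, Finset.sum_prod_piFinset (univ : Finset Bool)
      (fun j b => Complex.exp (-(2*Real.pi*Complex.I) *
          (((if b then (1:ℝ) else -1) * (cϖ i (σ j) * u j) : ℝ) : ℂ)))]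
    have hj : ∀ j : Fin n, (∑ b : Bool, Complex.exp (-(2*Real.pi*Complex.I) *
          (((if b then (1:ℝ) else -1) * (cϖ i (σ j) * u j) : ℝ) : ℂ)))
        = 2 * (if ((σ j : ℕ) ≤ (i:ℕ)) then Complex.cos (2*Real.pi*u j) else 1) := by
      intro j
      rw [sum_bool_exp (cϖ i (σ j) * u j)]
      by_cases h : ((σ j : ℕ) ≤ (i:ℕ)) <;> simp [cϖ, h, ← Fin.val_fin_le]
    rw [Finset.prod_congr rfl (fun j _ => hj j), Finset.prod_mul_distrib]
    simp [Finset.prod_ite, Finset.prod_const]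
  rw [Finset.sum_congr rfl (fun σ _ => hσ σ), ← Finset.mul_sum]
  have hcard : (Fintype.card (Equiv.Perm (Fin n) × (Fin n → Bool)) : ℂ)
      = (n.factorial : ℂ) * 2^n := by
    simp [Fintype.card_perm, Fintype.card_fun]
  rw [hcard]
  have h2 : (2:ℂ)^n ≠ 0 := pow_ne_zero _ two_ne_zero
  have hf : ((n.factorial : ℂ)) ≠ 0 := by exact_mod_cast Nat.factorial_ne_zero n
  field_simp

lemma perm_sum_congr (c : Fin n → ℂ) {A B : Finset (Fin n)} (h : A.card = B.card) :
    ∑ σ : Equiv.Perm (Fin n), ∏ j ∈ univ.filter (fun j => σ j ∈ A), c j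
    = ∑ σ : Equiv.Perm (Fin n), ∏ j ∈ univ.filter (fun j => σ j ∈ B), c j := by
  classical
  let e : {x // x ∈ A} ≃ {x // x ∈ B} := Finset.equivOfCardEq h
  let π : Equiv.Perm (Fin n) := e.extendSubtype
  have hπ : ∀ x, x ∈ A ↔ π x ∈ B := by
    intro x
    constructor
    · exact fun hx => e.extendSubtype_mem x hx
    · intro hx; by_contra hA; exact e.extendSubtype_not_mem x hA hx
  refine Fintype.sum_equiv (Equiv.mulLeft π) _ _ (fun σ => ?_)
  apply Finset.prod_congr _ (fun _ _ => rfl)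
  ext j
  simp only [mem_filter, mem_univ, true_and]
  exact hπ (σ j)

lemma perm_sum_eq (c : Fin n → ℂ) (A : Finset (Fin n)) :
    (n.choose A.card : ℂ) * ∑ σ : Equiv.Perm (Fin n), ∏ j ∈ univ.filter (fun j => σ j ∈ A), c j
    = (n.factorial : ℂ) * ∑ S ∈ powersetCard A.card univ, ∏ j ∈ S, c j := by
  classical
  have h1 : ∑ B ∈ powersetCard A.card (univ : Finset (Fin n)),
      (∑ σ : Equiv.Perm (Fin n), ∏ j ∈ univ.filter (fun j => σ j ∈ B), c j)
      = (n.choose A.card : ℂ) *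
        ∑ σ : Equiv.Perm (Fin n), ∏ j ∈ univ.filter (fun j => σ j ∈ A), c j := by
    have key : ∀ B ∈ powersetCard A.card (univ : Finset (Fin n)),
        (∑ σ : Equiv.Perm (Fin n), ∏ j ∈ univ.filter (fun j => σ j ∈ B), c j)
        = ∑ σ : Equiv.Perm (Fin n), ∏ j ∈ univ.filter (fun j => σ j ∈ A), c j := by
      intro B hB
      exact perm_sum_congr c ((Finset.mem_powersetCard.mp hB).2)
    rw [Finset.sum_congr rfl key, Finset.sum_const, Finset.card_powersetCard,
      Finset.card_univ, Fintype.card_fin, nsmul_eq_mul]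
  have h2 : ∑ B ∈ powersetCard A.card (univ : Finset (Fin n)),
      (∑ σ : Equiv.Perm (Fin n), ∏ j ∈ univ.filter (fun j => σ j ∈ B), c j)
      = (n.factorial : ℂ) * ∑ S ∈ powersetCard A.card univ, ∏ j ∈ S, c j := by
    rw [Finset.sum_comm]
    have inner : ∀ σ : Equiv.Perm (Fin n),
        ∑ B ∈ powersetCard A.card (univ : Finset (Fin n)),
          (∏ j ∈ univ.filter (fun j => σ j ∈ B), c j)
        = ∑ S ∈ powersetCard A.card univ, ∏ j ∈ S, c j := by
      intro σ
      refine Finset.sum_nbij' (fun B => B.map σ.symm.toEmbedding)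
        (fun S => S.map σ.toEmbedding) ?_ ?_ ?_ ?_ ?_
      · intro B hB
        simp only [Finset.mem_powersetCard] at *
        exact ⟨Finset.subset_univ _, by simp [hB.2]⟩
      · intro S hS
        simp only [Finset.mem_powersetCard] at *
        exact ⟨Finset.subset_univ _, by simp [hS.2]⟩
      · intro B _; ext x; simp
      · intro S _; ext x; simp
      · intro B hB
        apply Finset.prod_congr _ (fun _ _ => rfl)
        ext j
        simp [Finset.mem_map]
    rw [Finset.sum_congr rfl (fun σ _ => inner σ), Finset.sum_const, Finset.card_univ,
      Fintype.card_perm, Fintype.card_fin, nsmul_eq_mul]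
  rw [← h1, h2]

lemma card_filter_le (i : Fin n) :
    (univ.filter (fun j : Fin n => (j:ℕ) ≤ (i:ℕ))).card = (i:ℕ) + 1 := by
  have : univ.filter (fun j : Fin n => (j:ℕ) ≤ (i:ℕ)) = Finset.Iic i := by
    ext j; simp only [mem_filter, mem_univ, true_and, Finset.mem_Iic, Fin.le_def]
  rw [this, Fin.card_Iic]

lemma vieta (c : Fin n → ℂ) :
    ∑ i : Fin n, ∑ S ∈ powersetCard ((i:ℕ)+1) (univ : Finset (Fin n)), ∏ j ∈ S, c j
    = (∏ k, (1 + c k)) - 1 := by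
  have hprod : ∏ k, (1 + c k) = ∑ t ∈ (univ : Finset (Fin n)).powerset, ∏ j ∈ t, c j := by
    have := Finset.prod_add c (fun _ => (1:ℂ)) (univ : Finset (Fin n))
    simp only [Finset.prod_const_one, mul_one] at this
    rw [← this]
    exact Finset.prod_congr rfl (fun k _ => by ring)
  rw [hprod, Finset.sum_powerset, Finset.card_univ,
    Fintype.card_fin, Finset.sum_range_succ', Finset.powersetCard_zero]
  simp [Fin.sum_univ_eq_sum_range
    (fun m => ∑ S ∈ powersetCard (m+1) (univ : Finset (Fin n)), ∏ j ∈ S, c j)]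

lemma main_identity (u : EV n) :
    ∑ i : Fin n, ((n.choose ((i : ℕ) + 1)) : ℂ) * cGencos (cϖ i) u
    = ((∏ k, (1 + Real.cos (2 * Real.pi * u k)) : ℝ) : ℂ) - 1 := by
  classical
  set c : Fin n → ℂ := fun j => Complex.cos (2*Real.pi*u j) with hc
  have hterm : ∀ i : Fin n, ((n.choose ((i:ℕ)+1)) : ℂ) * cGencos (cϖ i) u
      = ∑ S ∈ powersetCard ((i:ℕ)+1) (univ : Finset (Fin n)), ∏ j ∈ S, c j := by
    intro i
    set A : Finset (Fin n) := univ.filter (fun j : Fin n => (j:ℕ) ≤ (i:ℕ)) with hA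
    have hAcard : A.card = (i:ℕ) + 1 := card_filter_le i
    have hmem : ∀ σ : Equiv.Perm (Fin n),
        univ.filter (fun j => ((σ j : ℕ) ≤ (i:ℕ))) = univ.filter (fun j => σ j ∈ A) := by
      intro σ; ext j; simp [hA]
    have := perm_sum_eq c A
    rw [hAcard] at this
    rw [cGencos_cϖ i u]
    have hf : ((n.factorial : ℂ)) ≠ 0 := by exact_mod_cast Nat.factorial_ne_zero n
    calc ((n.choose ((i:ℕ)+1)) : ℂ) * ((n.factorial : ℂ)⁻¹ *
          ∑ σ : Equiv.Perm (Fin n), ∏ j ∈ univ.filter (fun j => ((σ j : ℕ) ≤ (i:ℕ))), c j)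
        = (n.factorial : ℂ)⁻¹ * ((n.choose ((i:ℕ)+1)) : ℂ) *
          ∑ σ : Equiv.Perm (Fin n), ∏ j ∈ univ.filter (fun j => σ j ∈ A), c j := by
          rw [Finset.sum_congr rfl (fun σ _ => by rw [hmem σ])]; ring
      _ = (n.factorial : ℂ)⁻¹ * ((n.factorial : ℂ) *
          ∑ S ∈ powersetCard ((i:ℕ)+1) (univ : Finset (Fin n)), ∏ j ∈ S, c j) := by
          rw [mul_assoc, this]
      _ = ∑ S ∈ powersetCard ((i:ℕ)+1) (univ : Finset (Fin n)), ∏ j ∈ S, c j := by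
          rw [← mul_assoc, inv_mul_cancel₀ hf, one_mul]
  rw [Finset.sum_congr rfl (fun i _ => hterm i), vieta c]
  congr 1
  rw [Complex.ofReal_prod]
  refine Finset.prod_congr rfl (fun k _ => ?_)
  simp only [hc]
  push_cast [Complex.ofReal_cos]
  ring_nf

end Statement18Aux

open Statement18Aux Finset in
/-- For `Cₙ`, the Vieta identity
`Σᵢ C(n,i) Θ_{ϖᵢ}(u) = Πₖ (1 + cos(2π uₖ)) − 1 ≥ −1` holds, with equality at `u = ϖⱼ/2`.
Consequently, with `cᵢ = C(n,i)/(2ⁿ−1)`, the minimum of `Σᵢ cᵢ zᵢ` on the Chebyshev image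
is `−1/(2ⁿ−1)`, and the spectral bound yields `χ_m(ℝⁿ, ∂Vor(ℤⁿ)) ≥ 2ⁿ`, which is sharp. -/
theorem statement18 {n : ℕ} (hn : 1 ≤ n) :
    -- the Vieta identity:
    (∀ u : EV n, ∑ i : Fin n, ((n.choose ((i : ℕ) + 1)) : ℂ) * cGencos (cϖ i) u
        = ((∏ k, (1 + Real.cos (2 * Real.pi * u k)) : ℝ) : ℂ) - 1) ∧
    -- the lower bound `−1`:
    (∀ u : EV n,
      -1 ≤ (∑ i : Fin n, ((n.choose ((i : ℕ) + 1)) : ℂ) * cGencos (cϖ i) u).re) ∧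
    -- equality is attained at `u = ϖⱼ/2`:
    (∀ j : Fin n, (∑ i : Fin n, ((n.choose ((i : ℕ) + 1)) : ℂ)
        * cGencos (cϖ i) ((1 / 2 : ℝ) • cϖ j)) = -1) ∧
    -- with `cᵢ = C(n,i)/(2ⁿ−1)`, the minimum on the Chebyshev image is `−1/(2ⁿ−1)`:
    IsLeast { x : ℝ | ∃ u : EV n,
      ∑ i : Fin n, (((n.choose ((i : ℕ) + 1)) : ℂ) / ((2 ^ n - 1 : ℕ) : ℂ))
          * cGencos (cϖ i) u = (x : ℂ) } (-(1 / ((2 : ℝ) ^ n - 1))) ∧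
    -- the spectral bound `χ_m(ℝⁿ, ∂Vor(ℤⁿ)) ≥ 2ⁿ`:
    (∀ (k : ℕ) (C : Fin k → Set (EV n)), (∀ i, MeasurableSet (C i)) →
      (∀ i j, i ≠ j → C i ∩ C j = ∅) → (∀ v : EV n, ∃ i, v ∈ C i) →
      (∀ i, ∀ u ∈ C i, ∀ w ∈ C i, u - w ∉ cubeBoundary n) → 2 ^ n ≤ k) ∧
    -- and it is sharp:
    (∃ C : Fin (2 ^ n) → Set (EV n), (∀ i, MeasurableSet (C i)) ∧
      (∀ i j, i ≠ j → C i ∩ C j = ∅) ∧ (∀ v : EV n, ∃ i, v ∈ C i) ∧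
      (∀ i, ∀ u ∈ C i, ∀ w ∈ C i, u - w ∉ cubeBoundary n)) := by
  classical
  have hid := fun u : EV n => main_identity u
  have hP : ∀ u : EV n, 0 ≤ ∏ k, (1 + Real.cos (2 * Real.pi * u k)) := by
    intro u
    exact Finset.prod_nonneg fun k _ => by nlinarith [Real.neg_one_le_cos (2 * Real.pi * u k)]
  -- equality at ϖⱼ/2
  have heq : ∀ j : Fin n, (∑ i : Fin n, ((n.choose ((i : ℕ) + 1)) : ℂ)
      * cGencos (cϖ i) ((1 / 2 : ℝ) • cϖ j)) = -1 := by
    intro j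
    rw [hid]
    have hz : ∏ k, (1 + Real.cos (2 * Real.pi * (((1 / 2 : ℝ) • cϖ j) k))) = 0 := by
      apply Finset.prod_eq_zero (Finset.mem_univ (⟨0, hn⟩ : Fin n))
      have hval : ((1 / 2 : ℝ) • cϖ j) (⟨0, hn⟩ : Fin n) = 1 / 2 := by
        have : cϖ j (⟨0, hn⟩ : Fin n) = 1 := by simp [cϖ, ← Fin.val_fin_le]
        simp [PiLp.smul_apply, this]
      rw [hval, show 2 * Real.pi * (1 / 2 : ℝ) = Real.pi by ring, Real.cos_pi]
      ring
    rw [hz]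
    norm_num
  refine ⟨hid, ?_, heq, ?_, ?_, ?_⟩
  -- lower bound -1
  · intro u
    rw [hid u]
    simp only [Complex.sub_re, Complex.ofReal_re, Complex.one_re]
    linarith [hP u]
  -- IsLeast
  · have h1lt : (1 : ℝ) < 2 ^ n := by
      calc (1:ℝ) < 2 := by norm_num
        _ = 2 ^ 1 := by norm_num
        _ ≤ 2 ^ n := by apply pow_le_pow_right₀ <;> norm_num [hn]
    set r : ℝ := (2:ℝ) ^ n - 1 with hr
    have hrpos : 0 < r := by simp [hr]; linarith
    have hD : ((2 ^ n - 1 : ℕ) : ℂ) = ((r : ℝ) : ℂ) := by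
      have h12 : 1 ≤ 2 ^ n := Nat.one_le_two_pow
      push_cast [h12, hr]
      ring
    have hD0 : ((2 ^ n - 1 : ℕ) : ℂ) ≠ 0 := by
      rw [hD]
      exact_mod_cast ne_of_gt hrpos
    have hS : ∀ u : EV n, ∑ i : Fin n, (((n.choose ((i : ℕ) + 1)) : ℂ) / ((2 ^ n - 1 : ℕ) : ℂ))
        * cGencos (cϖ i) u
        = (∑ i : Fin n, ((n.choose ((i : ℕ) + 1)) : ℂ) * cGencos (cϖ i) u)
            / ((2 ^ n - 1 : ℕ) : ℂ) := by
      intro u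
      rw [Finset.sum_div]
      exact Finset.sum_congr rfl fun i _ => by ring
    constructor
    · refine ⟨(1 / 2 : ℝ) • cϖ (⟨0, hn⟩ : Fin n), ?_⟩
      rw [hS, heq (⟨0, hn⟩ : Fin n), hD]
      push_cast
      ring
    · rintro x ⟨u, hu⟩
      rw [hS u, div_eq_iff hD0, hid u, hD] at hu
      have hre : ∏ k, (1 + Real.cos (2 * Real.pi * u k)) - 1 = x * r := by
        exact_mod_cast hu
      have hxr : -1 ≤ x * r := by linarith [hP u]
      calc -(1 / r) = (-1) / r := by ring
        _ ≤ x := (div_le_iff₀ hrpos).mpr (by linarith)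
  -- spectral bound
  · intro k C _ _ hcover hadj
    by_contra hk
    push_neg at hk
    set p : (Fin n → Bool) → EV n := fun s => WithLp.toLp 2 (fun i => if s i then (1/2 : ℝ) else 0) with hp
    have hfun : ∀ s, ∃ i, p s ∈ C i := fun s => hcover (p s)
    choose f hf using hfun
    have hcardlt : Fintype.card (Fin k) < Fintype.card (Fin n → Bool) := by
      simp only [Fintype.card_fin, Fintype.card_fun, Fintype.card_bool]
      omega
    obtain ⟨s, t, hst, hfe⟩ := Fintype.exists_ne_map_eq_of_card_lt f hcardlt
    refine hadj (f t) (p s) (hfe ▸ hf s) (p t) (hf t) ?_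
    constructor
    · intro i
      rw [PiLp.sub_apply]
      simp only [hp]
      rcases Bool.eq_false_or_eq_true (s i) with h1 | h1 <;>
        rcases Bool.eq_false_or_eq_true (t i) with h2 | h2 <;>
          simp [h1, h2, abs_of_nonneg, abs_sub_comm]
    · obtain ⟨i, hi⟩ := Function.ne_iff.mp hst
      refine ⟨i, ?_⟩
      rw [PiLp.sub_apply]
      simp only [hp]
      rcases Bool.eq_false_or_eq_true (s i) with h1 | h1 <;>
        rcases Bool.eq_false_or_eq_true (t i) with h2 | h2 <;>
          simp [h1, h2, abs_sub_comm] at hi ⊢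
  -- sharpness
  · have hc : Fintype.card (Fin n → Bool) = 2 ^ n := by
      simp [Fintype.card_fun]
    let e : (Fin n → Bool) ≃ Fin (2 ^ n) := Fintype.equivFinOfCardEq hc
    set g : EV n → (Fin n → Bool) := fun v j => decide ((⌊2 * v j⌋ % 2) = 0) with hg
    refine ⟨fun i => {v | g v = e.symm i}, ?_, ?_, ?_, ?_⟩
    · intro i
      show MeasurableSet {v : EV n | g v = e.symm i}
      have : {v : EV n | g v = e.symm i} = ⋂ j, {v : EV n | g v j = e.symm i j} := by
        ext v; simp [funext_iff, Set.mem_iInter]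
      rw [this]
      refine MeasurableSet.iInter fun j => ?_
      have hmj : Measurable fun v : EV n => (⌊2 * v j⌋ : ℤ) :=
        Int.measurable_floor.comp (measurable_const.mul
          ((EuclideanSpace.proj (𝕜 := ℝ) j).continuous.measurable))
      have : {v : EV n | g v j = e.symm i j}
          = (fun v : EV n => (⌊2 * v j⌋ : ℤ)) ⁻¹' {z : ℤ | decide (z % 2 = 0) = e.symm i j} := by
        ext v; simp [hg]
      rw [this]
      exact hmj trivial
    · intro i j hij
      ext v
      simp only [Set.mem_inter_iff, Set.mem_setOf_eq, Set.mem_empty_iff_false, iff_false]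
      rintro ⟨h1, h2⟩
      exact hij (e.symm.injective (h1 ▸ h2))
    · intro v
      exact ⟨e (g v), by simp⟩
    · rintro i u hu w hw ⟨hle, j, habs⟩
      have hgj : g u j = g w j := by
        rw [Set.mem_setOf_eq] at hu hw
        rw [hu, hw]
      have hfl : ⌊2 * u j⌋ % 2 = ⌊2 * w j⌋ % 2 := by
        simp only [hg, decide_eq_decide] at hgj
        omega
      rw [PiLp.sub_apply] at habs
      rcases abs_eq (by norm_num : (0:ℝ) ≤ 1/2) |>.mp habs with h | h
      · have : 2 * u j = 2 * w j + (1 : ℤ) := by push_cast; linarith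
        rw [this, Int.floor_add_intCast] at hfl
        omega
      · have : 2 * w j = 2 * u j + (1 : ℤ) := by push_cast; linarith
        rw [this, Int.floor_add_intCast] at hfl
        omega
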